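/- Suppose α, β, γ ∈ ℂ and c ∈ (-1,1), s = √(1−c²) > 0, satisfy the system: √2·s·α + (1+c)β = 0, √2·c·α − s·β = 0, 2√2(1−c)s·α + (1−c)(1+3c)β − √2(1+c)s·γ = 0, c·s·α + √2(1+c²)β + c·s·γ = 0, −√2(1+c)s·α + (1−c)(1+3c)β + 2√2(1−c)s·γ = 0, −s·β + √2·c·γ = 0, (1+c)β + √2·s·γ = 0. Then α = β = γ = 0; in particular there is no solution with |α|² + |β|² + |γ|² = 1. -/

import Mathlib

theorem delocalization_system (c s : ℝ) (hc : c ∈ Set.Ioo (-1 : ℝ) 1)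
    (hs : s = Real.sqrt (1 - c^2)) (α β γ : ℂ)
    (e1 : (Real.sqrt 2 * s : ℝ) * α + ((1 + c : ℝ)) * β = 0)
    (e2 : (Real.sqrt 2 * c : ℝ) * α - (s : ℝ) * β = 0)
    (e3 : (2 * Real.sqrt 2 * (1 - c) * s : ℝ) * α + ((1 - c) * (1 + 3*c) : ℝ) * β
            - (Real.sqrt 2 * (1 + c) * s : ℝ) * γ = 0)
    (e4 : (c * s : ℝ) * α + (Real.sqrt 2 * (1 + c^2) : ℝ) * β + (c * s : ℝ) * γ = 0)
    (e5 : -(Real.sqrt 2 * (1 + c) * s : ℝ) * α + ((1 - c) * (1 + 3*c) : ℝ) * β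
            + (2 * Real.sqrt 2 * (1 - c) * s : ℝ) * γ = 0)
    (e6 : -(s : ℝ) * β + (Real.sqrt 2 * c : ℝ) * γ = 0)
    (e7 : ((1 + c : ℝ)) * β + (Real.sqrt 2 * s : ℝ) * γ = 0) :
    α = 0 ∧ β = 0 ∧ γ = 0 ∧
      ¬ (‖α‖^2 + ‖β‖^2 + ‖γ‖^2 = 1) := by
  obtain ⟨hc1, hc2⟩ := hc
  have hs2 : s ^ 2 = 1 - c ^ 2 := by
    rw [hs]; exact Real.sq_sqrt (by nlinarith)
  have hspos : 0 < s := by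
    rw [hs]; exact Real.sqrt_pos.mpr (by nlinarith)
  have hs2c : (s : ℂ) ^ 2 = 1 - (c : ℂ) ^ 2 := by exact_mod_cast congrArg Complex.ofReal hs2
  have hsq : (Real.sqrt 2 : ℂ) ≠ 0 := by
    exact_mod_cast Real.sqrt_ne_zero'.mpr (by norm_num)
  have h1c : (1 + (c : ℂ)) ≠ 0 := by
    have : (1 + c : ℝ) ≠ 0 := by linarith
    exact_mod_cast this
  have hsne : (s : ℂ) ≠ 0 := by exact_mod_cast hspos.ne'
  push_cast at e1 e2 e7
  have key : (Real.sqrt 2 : ℂ) * ((1 + (c : ℂ)) * α) = 0 := by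
    linear_combination (s : ℂ) * e1 + (1 + (c : ℂ)) * e2 - (Real.sqrt 2 : ℂ) * α * hs2c
  have hα : α = 0 := by
    rcases mul_eq_zero.mp key with h | h
    · exact absurd h hsq
    · rcases mul_eq_zero.mp h with h' | h'
      · exact absurd h' h1c
      · exact h'
  have hβ : β = 0 := by
    rw [hα, mul_zero, zero_add] at e1
    exact (mul_eq_zero.mp e1).resolve_left h1c
  have hγ : γ = 0 := by
    rw [hβ, mul_zero, zero_add, mul_assoc] at e7
    rcases mul_eq_zero.mp e7 with h | h
    · exact absurd h hsq
    · exact (mul_eq_zero.mp h).resolve_left hsne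
  refine ⟨hα, hβ, hγ, ?_⟩
  simp [hα, hβ, hγ]
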